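/- Let K, K₀ ∈ 𝒦^{n*} and let r = d_H(K,K₀) be their Hausdorff distance. Then δ^t(K) ≤ (1+r)^{2n}·δ^t(K₀). -/

import Mathlib

open Metric Set Pointwise MeasureTheory Filter ENNReal

open Topology

lemma aux_subset_smul {n : ℕ} {A B : Set (EuclideanSpace ℝ (Fin n))}
    (hAcomp : IsCompact A) (hAconv : Convex ℝ A)
    (hA1 : closedBall (0 : EuclideanSpace ℝ (Fin n)) 1 ⊆ A)
    (hBcomp : IsCompact B) (hBne : B.Nonempty)
    {r : ℝ} (hr0 : 0 ≤ r) (hd : hausdorffDist B A ≤ r) :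
    B ⊆ (1 + r) • A := by
  have hAne : A.Nonempty := ⟨0, hA1 (by simp)⟩
  intro x hx
  have hfin : EMetric.hausdorffEdist B A ≠ ⊤ :=
    hausdorffEdist_ne_top_of_nonempty_of_bounded hBne hAne hBcomp.isBounded hAcomp.isBounded
  have h1 : infDist x A ≤ r := (infDist_le_hausdorffDist_of_mem hx hfin).trans hd
  obtain ⟨y, hyA, hxy⟩ := hAcomp.exists_infDist_eq_dist hAne x
  have hdxy : dist x y ≤ r := by rw [← hxy]; exact h1
  have h2 : closedBall (0 : EuclideanSpace ℝ (Fin n)) r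
      = r • closedBall (0 : EuclideanSpace ℝ (Fin n)) 1 := by
    rw [_root_.smul_closedBall _ _ zero_le_one, smul_zero, Real.norm_eq_abs,
      abs_of_nonneg hr0, mul_one]
  have hsub : x - y ∈ r • A := by
    apply smul_set_mono hA1
    rw [← h2]
    simpa [mem_closedBall_zero_iff, ← dist_eq_norm] using hdxy
  have hmem : y + (x - y) ∈ (1:ℝ) • A + r • A :=
    Set.add_mem_add (by simpa using hyA) hsub
  rw [← hAconv.add_smul zero_le_one hr0] at hmem
  simpa using hmem

lemma aux_vol {n : ℕ} {K K₀ : Set (EuclideanSpace ℝ (Fin n))}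
    (hKu : K ⊆ closedBall 0 n) {s : ℝ} (hs : 1 ≤ s) (hscale : s⁻¹ • K ⊆ K₀)
    (x : EuclideanSpace ℝ (Fin n)) (R : ℝ) :
    volume ((x +ᵥ K) ∩ closedBall 0 R)
      ≤ ENNReal.ofReal (s ^ n) * volume ((s • x +ᵥ K₀) ∩ closedBall 0 (s * (R + n))) := by
  have hs0 : 0 < s := lt_of_lt_of_le one_pos hs
  set A := (x +ᵥ K) ∩ closedBall 0 R with hA
  rcases A.eq_empty_or_nonempty with h | h
  · simp [h]
  obtain ⟨y, hyK, hyB⟩ := h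
  obtain ⟨k, hk, hky⟩ := hyK
  have hknorm : ‖k‖ ≤ n := mem_closedBall_zero_iff.1 (hKu hk)
  have hynorm : ‖y‖ ≤ R := mem_closedBall_zero_iff.1 hyB
  have hxnorm : ‖x‖ ≤ R + n := by
    have : x = y - k := by rw [← hky]; simp [vadd_eq_add]
    rw [this]
    calc ‖y - k‖ ≤ ‖y‖ + ‖k‖ := norm_sub_le _ _
    _ ≤ R + n := add_le_add hynorm hknorm
  set c : EuclideanSpace ℝ (Fin n) := (s - s⁻¹) • x with hc
  set φ : EuclideanSpace ℝ (Fin n) → EuclideanSpace ℝ (Fin n) := fun z => c + s⁻¹ • z with hφ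
  have him : φ '' A ⊆ (s • x +ᵥ K₀) ∩ closedBall 0 (s * (R + n)) := by
    rintro _ ⟨z, ⟨hz1, hz2⟩, rfl⟩
    obtain ⟨k', hk', hk'z⟩ := hz1
    constructor
    · refine ⟨s⁻¹ • k', hscale (smul_mem_smul_set hk'), ?_⟩
      show s • x + s⁻¹ • k' = φ z
      rw [hφ, hc, ← hk'z]
      show s • x + s⁻¹ • k' = (s - s⁻¹) • x + s⁻¹ • (x + k')
      rw [smul_add, sub_smul]
      abel
    · have hznorm : ‖z‖ ≤ R := mem_closedBall_zero_iff.1 hz2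
      rw [mem_closedBall_zero_iff]
      have h1 : ‖φ z‖ ≤ (s - s⁻¹) * ‖x‖ + s⁻¹ * ‖z‖ := by
        calc ‖c + s⁻¹ • z‖ ≤ ‖c‖ + ‖s⁻¹ • z‖ := norm_add_le _ _
        _ = (s - s⁻¹) * ‖x‖ + s⁻¹ * ‖z‖ := by
            rw [hc, norm_smul, norm_smul, Real.norm_eq_abs, Real.norm_eq_abs,
              abs_of_nonneg (by nlinarith [inv_le_one_of_one_le₀ hs]),
              abs_of_nonneg (by positivity)]
      have hsinv : s⁻¹ ≤ s := (inv_le_one_of_one_le₀ hs).trans hs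
      have hsinv0 : 0 ≤ s⁻¹ := by positivity
      have hn0 : (0:ℝ) ≤ n := Nat.cast_nonneg n
      have hR0 : 0 ≤ R := le_trans (norm_nonneg y) hynorm
      calc ‖φ z‖ ≤ (s - s⁻¹) * ‖x‖ + s⁻¹ * ‖z‖ := h1
      _ ≤ (s - s⁻¹) * (R + n) + s⁻¹ * R := by
          gcongr
      _ ≤ s * (R + n) := by nlinarith
  have hφA : φ '' A = c +ᵥ (s⁻¹ • A) := by
    rw [hφ, ← Set.image_smul, ← Set.image_vadd, Set.image_image]
    rfl
  have hvol : volume (φ '' A) = ENNReal.ofReal (s⁻¹ ^ n) * volume A := by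
    rw [hφA, measure_vadd, Measure.addHaar_smul, finrank_euclideanSpace_fin,
      abs_of_nonneg (by positivity)]
  calc volume A = ENNReal.ofReal (s ^ n) * volume (φ '' A) := by
        rw [hvol, ← mul_assoc, ← ENNReal.ofReal_mul (by positivity), ← mul_pow,
          mul_inv_cancel₀ (ne_of_gt hs0), one_pow, ENNReal.ofReal_one, one_mul]
  _ ≤ _ := mul_le_mul_right (measure_mono him) _

lemma aux_limsup_comp {g : ℝ → ℝ≥0∞} {h : ℝ → ℝ} (hh : Tendsto h atTop atTop) :
    Filter.limsup (fun R => g (h R)) Filter.atTop ≤ Filter.limsup g Filter.atTop := by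
  have hmap : Filter.map (fun R => g (h R)) atTop ≤ Filter.map g atTop := by
    calc Filter.map (fun R => g (h R)) atTop = Filter.map g (Filter.map h atTop) :=
          (Filter.map_map).symm
    _ ≤ Filter.map g atTop := Filter.map_mono hh
  exact limsSup_le_limsSup_of_le hmap

lemma aux_ratio_tendsto (n : ℕ) :
    Tendsto (fun R : ℝ => ((R + n) / R) ^ n) atTop (nhds 1) := by
  have h1 : Tendsto (fun R : ℝ => (R + n) / R) atTop (nhds 1) := by
    have h2 : Tendsto (fun R : ℝ => 1 + n / R) atTop (nhds (1 + 0)) :=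
      tendsto_const_nhds.add (tendsto_const_nhds.div_atTop tendsto_id)
    rw [add_zero] at h2
    refine h2.congr' ?_
    filter_upwards [eventually_gt_atTop 0] with R hR
    field_simp
  simpa using h1.pow n

/-- The density of the system of translates `{K + x : x ∈ X}`:
`limsup_{R → ∞} (∑_{x ∈ X} vol((K + x) ∩ R·Bⁿ)) / vol(R·Bⁿ)`. -/
noncomputable def transDensity (n : ℕ) (K X : Set (EuclideanSpace ℝ (Fin n))) : ℝ≥0∞ :=
  Filter.limsup
    (fun R : ℝ =>
      (∑' x : X, volume (((x : EuclideanSpace ℝ (Fin n)) +ᵥ K) ∩ closedBall 0 R)) /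
        volume (closedBall (0 : EuclideanSpace ℝ (Fin n)) R))
    Filter.atTop

/-- The translative packing density `δ^t(K)`: the supremum of the densities of `{K + x : x ∈ X}`
over all countable `X ⊆ ℝⁿ` such that the translates `K + x` (`x ∈ X`) have pairwise disjoint
interiors. -/
noncomputable def deltaT (n : ℕ) (K : Set (EuclideanSpace ℝ (Fin n))) : ℝ≥0∞ :=
  ⨆ (X : Set (EuclideanSpace ℝ (Fin n)))
    (_ : X.Countable ∧
      X.Pairwise fun x y => interior (x +ᵥ K) ∩ interior (y +ᵥ K) = ∅),
    transDensity n K X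

/-- Let `K, K₀ ∈ 𝒦^{n*}` and let `r = d_H(K, K₀)` be their Hausdorff distance.
Then `δ^t(K) ≤ (1+r)^{2n} · δ^t(K₀)`. -/
theorem stmt_3 (n : ℕ) (hn : 1 ≤ n) (K K₀ : Set (EuclideanSpace ℝ (Fin n)))
    (hKcomp : IsCompact K) (hKconv : Convex ℝ K) (hKint : (interior K).Nonempty)
    (hK₀comp : IsCompact K₀) (hK₀conv : Convex ℝ K₀) (hK₀int : (interior K₀).Nonempty)
    (hKl : closedBall (0 : EuclideanSpace ℝ (Fin n)) 1 ⊆ K) (hKu : K ⊆ closedBall 0 n)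
    (hK₀l : closedBall (0 : EuclideanSpace ℝ (Fin n)) 1 ⊆ K₀) (hK₀u : K₀ ⊆ closedBall 0 n)
    (r : ℝ) (hr : r = hausdorffDist K K₀) :
    deltaT n K ≤ ENNReal.ofReal ((1 + r) ^ (2 * n)) * deltaT n K₀ := by
  have hr0 : 0 ≤ r := hr ▸ hausdorffDist_nonneg
  have hs1 : 1 ≤ 1 + r := le_add_of_nonneg_right hr0
  set s : ℝ := 1 + r with hs_def
  have hs0 : 0 < s := lt_of_lt_of_le one_pos hs1
  have hsne : s ≠ 0 := ne_of_gt hs0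
  have hKne : K.Nonempty := ⟨0, hKl (by simp)⟩
  have hK₀ne : K₀.Nonempty := ⟨0, hK₀l (by simp)⟩
  have hKsub : K ⊆ s • K₀ :=
    aux_subset_smul hK₀comp hK₀conv hK₀l hKcomp hKne hr0 (le_of_eq hr.symm)
  have hscale : s⁻¹ • K ⊆ K₀ := by
    intro w hw
    have h1 : w ∈ s⁻¹ • (s • K₀) := smul_set_mono hKsub hw
    rwa [smul_smul, inv_mul_cancel₀ hsne, one_smul] at h1
  have hK₀subK : K₀ ⊆ s • K := by
    refine aux_subset_smul hKcomp hKconv hKl hK₀comp hK₀ne hr0 ?_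
    rw [hausdorffDist_comm]
    exact le_of_eq hr.symm
  set D := deltaT n K₀ with hD
  set c₀ := ENNReal.ofReal (s ^ (2 * n)) with hc₀
  rw [deltaT]
  refine iSup₂_le fun X hX => ?_
  obtain ⟨hXc, hXp⟩ := hX
  set X' := (fun z : EuclideanSpace ℝ (Fin n) => s • z) '' X with hX'
  have hinj : Function.Injective (fun z : EuclideanSpace ℝ (Fin n) => s • z) :=
    smul_right_injective _ hsne
  have hX'c : X'.Countable := hXc.image _
  have hX'p : X'.Pairwise fun x y => interior (x +ᵥ K₀) ∩ interior (y +ᵥ K₀) = ∅ := by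
    rintro _ ⟨x, hx, rfl⟩ _ ⟨y, hy, rfl⟩ hne
    have hxy : x ≠ y := fun h => hne (by rw [h])
    have h0 := hXp hx hy hxy
    have hsubmem : ∀ z : EuclideanSpace ℝ (Fin n), (s • z +ᵥ K₀) ⊆ s • (z +ᵥ K) := by
      rintro z _ ⟨k, hk, rfl⟩
      obtain ⟨k', hk', rfl⟩ := hK₀subK hk
      exact ⟨z + k', ⟨k', hk', rfl⟩, by simp [vadd_eq_add, smul_add]⟩
    rw [eq_empty_iff_forall_notMem]
    rintro w ⟨hw1, hw2⟩
    have hw1' : w ∈ s • interior (x +ᵥ K) := by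
      rw [← interior_smul₀ hsne]
      exact interior_mono (hsubmem x) hw1
    have hw2' : w ∈ s • interior (y +ᵥ K) := by
      rw [← interior_smul₀ hsne]
      exact interior_mono (hsubmem y) hw2
    obtain ⟨a, ha, rfl⟩ := hw1'
    obtain ⟨b, hb, hba⟩ := hw2'
    have : b = a := hinj hba
    rw [this] at hb
    have : a ∈ interior (x +ᵥ K) ∩ interior (y +ᵥ K) := ⟨ha, hb⟩
    rw [h0] at this
    exact this
  have hle : transDensity n K₀ X' ≤ D := by
    rw [hD, deltaT]
    exact le_iSup₂ (f := fun Y _ => transDensity n K₀ Y) X' ⟨hX'c, hX'p⟩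
  -- now prove transDensity n K X ≤ c₀ * D
  suffices hsuf : ∀ ε : ℝ, 0 < ε →
      transDensity n K X ≤ ENNReal.ofReal (1 + ε) * (c₀ * D) by
    rcases eq_or_ne (c₀ * D) ⊤ with htop | htop
    · calc transDensity n K X ≤ ⊤ := le_top
      _ = c₀ * D := htop.symm
    · have h1 : Tendsto (fun ε : ℝ => 1 + ε) (𝓝[>] (0:ℝ)) (nhds 1) := by
        have h0 := (continuous_add_left (1:ℝ)).tendsto (0:ℝ)
        rw [add_zero] at h0
        exact h0.mono_left nhdsWithin_le_nhds
      have h2 : Tendsto (fun ε : ℝ => ENNReal.ofReal (1 + ε)) (𝓝[>] (0:ℝ))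
          (nhds (ENNReal.ofReal 1)) := (ENNReal.continuous_ofReal.tendsto 1).comp h1
      have h3 := ENNReal.Tendsto.mul_const h2 (Or.inr htop)
      rw [ENNReal.ofReal_one, one_mul] at h3
      refine ge_of_tendsto h3 ?_
      filter_upwards [self_mem_nhdsWithin] with ε hε
      exact hsuf ε hε
  intro ε hε
  set g : ℝ → ℝ≥0∞ := fun R' =>
    (∑' x' : X', volume (((x' : EuclideanSpace ℝ (Fin n)) +ᵥ K₀) ∩ closedBall 0 R')) /
      volume (closedBall (0 : EuclideanSpace ℝ (Fin n)) R') with hg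
  have htend : Tendsto (fun R : ℝ => s * (R + n)) atTop atTop := by
    apply Tendsto.const_mul_atTop hs0
    exact tendsto_atTop_add_const_right _ _ tendsto_id
  have hbound : ∀ᶠ R in atTop,
      (∑' x : X, volume (((x : EuclideanSpace ℝ (Fin n)) +ᵥ K) ∩ closedBall 0 R)) /
          volume (closedBall (0 : EuclideanSpace ℝ (Fin n)) R)
        ≤ (ENNReal.ofReal (1 + ε) * c₀) * g (s * (R + n)) := by
    filter_upwards [eventually_ge_atTop (1:ℝ),
      (aux_ratio_tendsto n).eventually (eventually_le_nhds (lt_add_of_pos_right 1 hε))]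
      with R hR1 hRε
    have hR0 : 0 < R := lt_of_lt_of_le one_pos hR1
    set R' : ℝ := s * (R + n) with hR'
    have hR'0 : 0 < R' := by
      have hn0 : (0:ℝ) ≤ n := Nat.cast_nonneg n
      nlinarith
    set V := volume (closedBall (0 : EuclideanSpace ℝ (Fin n)) R) with hV
    set V' := volume (closedBall (0 : EuclideanSpace ℝ (Fin n)) R') with hV'
    have hV'0 : V' ≠ 0 := (measure_closedBall_pos volume _ hR'0).ne'
    have hV'top : V' ≠ ⊤ := measure_closedBall_lt_top.ne
    set S' : ℝ≥0∞ := ∑' x : X,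
      volume ((s • (x : EuclideanSpace ℝ (Fin n)) +ᵥ K₀) ∩ closedBall 0 R') with hS'
    have step1 : (∑' x : X,
        volume (((x : EuclideanSpace ℝ (Fin n)) +ᵥ K) ∩ closedBall 0 R))
        ≤ ENNReal.ofReal (s ^ n) * S' := by
      rw [hS', ← ENNReal.tsum_mul_left]
      exact ENNReal.tsum_le_tsum fun x => aux_vol hKu hs1 hscale _ R
    have step2 : S' = ∑' x' : X',
        volume (((x' : EuclideanSpace ℝ (Fin n)) +ᵥ K₀) ∩ closedBall 0 R') :=
      (tsum_image (fun w => volume ((w +ᵥ K₀) ∩ closedBall 0 R')) hinj.injOn).symm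
    have hu0 : volume (closedBall (0 : EuclideanSpace ℝ (Fin n)) 1) ≠ 0 :=
      (measure_closedBall_pos volume _ one_pos).ne'
    have hutop : volume (closedBall (0 : EuclideanSpace ℝ (Fin n)) 1) ≠ ⊤ :=
      measure_closedBall_lt_top.ne
    have hVV' : V' / V = ENNReal.ofReal (R' ^ n / R ^ n) := by
      rw [hV, hV', Measure.addHaar_closedBall' _ _ (le_of_lt hR'0),
        Measure.addHaar_closedBall' _ _ (le_of_lt hR0), finrank_euclideanSpace_fin,
        ENNReal.mul_div_mul_right _ _ hu0 hutop,
        ← ENNReal.ofReal_div_of_pos (pow_pos hR0 n)]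
    have hconst : ENNReal.ofReal (s ^ n) * (V' / V) ≤ ENNReal.ofReal (1 + ε) * c₀ := by
      rw [hVV', hc₀, ← ENNReal.ofReal_mul (by positivity), ← ENNReal.ofReal_mul (by positivity)]
      apply ENNReal.ofReal_le_ofReal
      have hkey : s ^ n * (R' ^ n / R ^ n) = s ^ (2 * n) * ((R + n) / R) ^ n := by
        rw [hR', mul_pow, div_pow, two_mul, pow_add]
        field_simp
      rw [hkey]
      have hs2n : (0:ℝ) ≤ s ^ (2 * n) := by positivity
      nlinarith
    have hcan : V'⁻¹ * V' = 1 := ENNReal.inv_mul_cancel hV'0 hV'top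
    calc (∑' x : X, volume (((x : EuclideanSpace ℝ (Fin n)) +ᵥ K) ∩ closedBall 0 R)) / V
        ≤ (ENNReal.ofReal (s ^ n) * S') / V := ENNReal.div_le_div_right step1 _
    _ = (ENNReal.ofReal (s ^ n) * (V' / V)) * (S' / V') := by
        rw [div_eq_mul_inv, div_eq_mul_inv, div_eq_mul_inv]
        calc ENNReal.ofReal (s ^ n) * S' * V⁻¹
            = ENNReal.ofReal (s ^ n) * S' * (V'⁻¹ * V') * V⁻¹ := by rw [hcan, mul_one]
        _ = ENNReal.ofReal (s ^ n) * (V' * V⁻¹) * (S' * V'⁻¹) := by ring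
    _ ≤ (ENNReal.ofReal (1 + ε) * c₀) * (S' / V') := mul_le_mul_left hconst _
    _ = (ENNReal.ofReal (1 + ε) * c₀) * g R' := by rw [hg, step2]
  calc transDensity n K X
      ≤ Filter.limsup (fun R => (ENNReal.ofReal (1 + ε) * c₀) * g (s * (R + n))) atTop :=
        Filter.limsup_le_limsup hbound
  _ = (ENNReal.ofReal (1 + ε) * c₀) * Filter.limsup (fun R => g (s * (R + n))) atTop :=
        ENNReal.limsup_const_mul_of_ne_top (by
          exact ENNReal.mul_ne_top ENNReal.ofReal_ne_top ENNReal.ofReal_ne_top)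
  _ ≤ (ENNReal.ofReal (1 + ε) * c₀) * Filter.limsup g atTop :=
        mul_le_mul_right (aux_limsup_comp htend) _
  _ = ENNReal.ofReal (1 + ε) * (c₀ * transDensity n K₀ X') := by
        rw [mul_assoc]; rfl
  _ ≤ ENNReal.ofReal (1 + ε) * (c₀ * D) := by gcongr
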